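/- For the binomial tree B_k with 2^{k−1} vertices (k ≥ 2), cfc(B_k) = k−1. -/

import Mathlib

/-- `c` is a conflict-free connection coloring of `G`: every pair of distinct
vertices is joined by a path on which some color appears on exactly one edge. -/
def IsCFCColoring {V : Type*} (G : SimpleGraph V) (c : Sym2 V → ℕ) : Prop :=
  ∀ u v : V, u ≠ v → ∃ p : G.Walk u v, p.IsPath ∧
    ∃ col : ℕ, (p.edges.filter (fun e => c e = col)).length = 1

/-- The conflict-free connection number of `G`: the least `k` such that some
coloring of the edges of `G` with colors `0, …, k-1` is a conflict-free
connection coloring. -/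
noncomputable def cfcNum {V : Type*} [Fintype V] (G : SimpleGraph V) : ℕ :=
  sInf {k | ∃ c : Sym2 V → ℕ, (∀ e ∈ G.edgeSet, c e < k) ∧ IsCFCColoring G c}
/-- The binomial tree `B_k` on `2^(k-1)` vertices: `B_1` is a single vertex,
and `B_k` is two copies of `B_{k-1}` joined by an edge between their roots.
Equivalently, each nonzero vertex `x` is joined to `x` with its highest set
bit removed. -/
def binomialTree (k : ℕ) : SimpleGraph (Fin (2 ^ (k - 1))) :=
  SimpleGraph.fromRel (fun x y =>
    (x : ℕ) ≠ 0 ∧ (y : ℕ) = (x : ℕ) - 2 ^ Nat.log 2 (x : ℕ))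

namespace CFCAux

open SimpleGraph

/-- The binomial tree reindexed. -/
abbrev BT (n : ℕ) : SimpleGraph (Fin (2 ^ n)) := binomialTree (n + 1)

/-- The parent of `x`: `x` with its highest bit removed. -/
def pv (x : ℕ) : ℕ := x % 2 ^ Nat.log 2 x

lemma pv_lt {x : ℕ} (hx : x ≠ 0) : pv x < x :=
  lt_of_lt_of_le (Nat.mod_lt _ (Nat.two_pow_pos _)) (Nat.pow_log_le_self 2 hx)

lemma pv_sub {x : ℕ} (hx : x ≠ 0) : x - 2 ^ Nat.log 2 x = pv x := by
  have h1 := Nat.pow_log_le_self 2 hx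
  have h2 := Nat.lt_pow_succ_log_self (b := 2) one_lt_two x
  rw [pow_succ] at h2
  unfold pv
  rw [Nat.mod_eq_sub_mod h1, Nat.mod_eq_of_lt (by omega)]

lemma adj_iff {n : ℕ} {x y : Fin (2 ^ n)} :
    (BT n).Adj x y ↔ x ≠ y ∧
      (((x : ℕ) ≠ 0 ∧ (y : ℕ) = pv x) ∨ ((y : ℕ) ≠ 0 ∧ (x : ℕ) = pv y)) := by
  have key : ∀ a b : Fin (2 ^ n),
      ((a : ℕ) ≠ 0 ∧ (b : ℕ) = (a : ℕ) - 2 ^ Nat.log 2 (a : ℕ)) ↔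
        ((a : ℕ) ≠ 0 ∧ (b : ℕ) = pv a) := by
    intro a b
    constructor
    · rintro ⟨h, h2⟩; exact ⟨h, h2.trans (pv_sub h)⟩
    · rintro ⟨h, h2⟩; exact ⟨h, h2.trans (pv_sub h).symm⟩
  show (SimpleGraph.fromRel _).Adj x y ↔ _
  rw [SimpleGraph.fromRel_adj, key x y, key y x]

def pfin {n : ℕ} (x : Fin (2 ^ n)) : Fin (2 ^ n) :=
  ⟨pv x.val, lt_of_le_of_lt (Nat.mod_le _ _) x.isLt⟩

lemma adj_pfin {n : ℕ} {x : Fin (2 ^ n)} (hx : (x : ℕ) ≠ 0) :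
    (BT n).Adj x (pfin x) := by
  refine adj_iff.2 ⟨?_, Or.inl ⟨hx, rfl⟩⟩
  intro h
  have := congrArg Fin.val h
  simp only [pfin] at this
  exact absurd this.symm (Nat.ne_of_lt (pv_lt hx))

/-- the canonical coloring: each edge gets the bit level of its larger endpoint. -/
def myc {n : ℕ} : Sym2 (Fin (2 ^ n)) → ℕ :=
  Sym2.lift ⟨fun a b => Nat.log 2 (max (a : ℕ) (b : ℕ)), fun a b => by simp only []; rw [max_comm]⟩

lemma myc_edge {n : ℕ} (x : Fin (2 ^ n)) (hx : (x : ℕ) ≠ 0) :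
    myc s(x, pfin x) = Nat.log 2 (x : ℕ) := by
  show Nat.log 2 (max (x : ℕ) (pv x.val)) = _
  rw [Nat.max_eq_left (le_of_lt (pv_lt hx))]

lemma exists_up (n d : ℕ) : ∀ (m : ℕ) (x w : Fin (2 ^ n)),
    (x : ℕ) < m → (w : ℕ) = (x : ℕ) % 2 ^ d →
    ∃ p : (BT n).Walk x w, p.IsPath ∧
      (∀ y ∈ p.support, ∃ j, d ≤ j ∧ (y : ℕ) = (x : ℕ) % 2 ^ j) ∧
      ∀ col, (p.edges.filter (fun e => myc e = col)).length =
        if d ≤ col ∧ (x : ℕ).testBit col then 1 else 0 := by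
  intro m
  induction m with
  | zero => intro x w h; omega
  | succ m ih =>
    intro x w hxm hw
    rcases lt_or_ge (x : ℕ) (2 ^ d) with hlt | hge
    · obtain rfl : w = x := Fin.ext (by rw [hw, Nat.mod_eq_of_lt hlt])
      refine ⟨SimpleGraph.Walk.nil, SimpleGraph.Walk.IsPath.nil, ?_, ?_⟩
      · intro y hy
        simp only [SimpleGraph.Walk.support_nil, List.mem_singleton] at hy
        subst hy
        exact ⟨d, le_refl d, (Nat.mod_eq_of_lt hlt).symm⟩
      · intro col
        simp only [SimpleGraph.Walk.edges_nil, List.filter_nil, List.length_nil]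
        rw [eq_comm, if_neg]
        rintro ⟨hdc, htb⟩
        have h2 : 2 ^ col ≤ (w : ℕ) := by
          by_contra hcon
          rw [Nat.testBit_lt_two_pow (by omega)] at htb
          exact Bool.false_ne_true htb
        have := Nat.pow_le_pow_right (by norm_num : 0 < 2) hdc
        omega
    · have hx0 : (x : ℕ) ≠ 0 := by have := Nat.two_pow_pos d; omega
      have hdL : d ≤ Nat.log 2 (x : ℕ) := (Nat.le_log_iff_pow_le one_lt_two hx0).2 hge
      have hpx_lt : pv (x : ℕ) < (x : ℕ) := pv_lt hx0
      have hxlt2 : (x : ℕ) < 2 ^ (Nat.log 2 (x : ℕ) + 1) :=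
        Nat.lt_pow_succ_log_self one_lt_two _
      have hw' : (w : ℕ) = ((pfin x : Fin (2 ^ n)) : ℕ) % 2 ^ d := by
        show (w : ℕ) = pv (x : ℕ) % 2 ^ d
        rw [hw]
        unfold pv
        rw [Nat.mod_mod_of_dvd _ (pow_dvd_pow 2 hdL)]
      obtain ⟨p', hp'path, hp'supp, hp'cnt⟩ := ih (pfin x) w (by
        show pv (x : ℕ) < m; omega) hw'
      refine ⟨SimpleGraph.Walk.cons (adj_pfin hx0) p', ?_, ?_, ?_⟩
      · refine hp'path.cons ?_
        intro hx_in
        obtain ⟨j, hj, hy⟩ := hp'supp x hx_in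
        have h1 : ((pfin x : Fin (2 ^ n)) : ℕ) % 2 ^ j ≤ pv (x : ℕ) := Nat.mod_le _ _
        rw [← hy] at h1
        omega
      · intro y hy
        rw [SimpleGraph.Walk.support_cons] at hy
        rcases List.mem_cons.1 hy with hyx | hy
        · exact ⟨Nat.log 2 (x : ℕ) + 1, by omega, by
            rw [hyx]; exact (Nat.mod_eq_of_lt hxlt2).symm⟩
        · obtain ⟨j, hj, hyv⟩ := hp'supp y hy
          rcases le_total j (Nat.log 2 (x : ℕ)) with hjL | hLj
          · refine ⟨j, hj, ?_⟩
            rw [hyv]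
            show pv (x : ℕ) % 2 ^ j = (x : ℕ) % 2 ^ j
            unfold pv
            rw [Nat.mod_mod_of_dvd _ (pow_dvd_pow 2 hjL)]
          · refine ⟨Nat.log 2 (x : ℕ), hdL, ?_⟩
            rw [hyv]
            show pv (x : ℕ) % 2 ^ j = (x : ℕ) % 2 ^ (Nat.log 2 (x : ℕ))
            have : pv (x : ℕ) < 2 ^ j :=
              lt_of_lt_of_le (Nat.mod_lt _ (Nat.two_pow_pos _))
                (Nat.pow_le_pow_right (by norm_num) hLj)
            rw [Nat.mod_eq_of_lt this]
            rfl
      · intro col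
        have hpvval : ((pfin x : Fin (2 ^ n)) : ℕ) = pv (x : ℕ) := rfl
        rw [SimpleGraph.Walk.edges_cons, List.filter_cons]
        by_cases hcol : Nat.log 2 (x : ℕ) = col
        · have hd : decide (myc s(x, pfin x) = col) = true := by
            rw [myc_edge x hx0, hcol]; simp
          have hbit : (x : ℕ).testBit (Nat.log 2 (x : ℕ)) = true := by
            rw [Nat.testBit_eq_decide_div_mod_eq]
            have h1 : 2 ^ Nat.log 2 (x : ℕ) ≤ (x : ℕ) := Nat.pow_log_le_self 2 hx0
            have hdiv : (x : ℕ) / 2 ^ Nat.log 2 (x : ℕ) = 1 :=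
              Nat.div_eq_of_lt_le (by omega) (by rw [pow_succ] at hxlt2; omega)
            rw [hdiv]
            rfl
          have hbitp : (pv (x : ℕ)).testBit (Nat.log 2 (x : ℕ)) = false :=
            Nat.testBit_lt_two_pow (Nat.mod_lt _ (Nat.two_pow_pos _))
          subst hcol
          rw [hd, if_pos rfl, List.length_cons, hp'cnt _, hpvval, hbitp,
            if_neg (by simp), if_pos ⟨hdL, hbit⟩]
        · have hd : decide (myc s(x, pfin x) = col) = false := by
            rw [myc_edge x hx0]; simp [hcol]
          have hbiteq : (pv (x : ℕ)).testBit col = (x : ℕ).testBit col := by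
            rcases Nat.lt_or_ge col (Nat.log 2 (x : ℕ)) with hc | hc
            · show ((x : ℕ) % 2 ^ Nat.log 2 (x : ℕ)).testBit col = _
              rw [Nat.testBit_mod_two_pow]
              simp [hc]
            · have hc' : Nat.log 2 (x : ℕ) < col := by omega
              have h1 : (x : ℕ) < 2 ^ col := lt_of_lt_of_le hxlt2
                (Nat.pow_le_pow_right (by norm_num) (by omega))
              rw [Nat.testBit_lt_two_pow h1, Nat.testBit_lt_two_pow (by omega)]
          rw [hd]
          simp only [Bool.false_eq_true, if_false]
          rw [hp'cnt col, hpvval, hbiteq]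

lemma append_isPath {V : Type*} {G : SimpleGraph V} {u v w : V}
    {p : G.Walk u w} {q : G.Walk w v} (hp : p.IsPath) (hq : q.IsPath)
    (h : ∀ y, y ∈ p.support → y ∈ q.support → y = w) : (p.append q).IsPath := by
  rw [SimpleGraph.Walk.isPath_def, SimpleGraph.Walk.support_append, List.nodup_append]
  refine ⟨hp.support_nodup, ?_, ?_⟩
  · have := hq.support_nodup
    rw [SimpleGraph.Walk.support_eq_cons] at this
    exact this.of_cons
  · intro y hyp y' hyt hyy'
    rw [← hyy'] at hyt
    have hwq : w ∉ q.support.tail := by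
      have := hq.support_nodup
      rw [SimpleGraph.Walk.support_eq_cons] at this
      exact (List.nodup_cons.1 this).1
    have hyq : y ∈ q.support := by
      rw [SimpleGraph.Walk.support_eq_cons]
      exact List.mem_cons_of_mem _ hyt
    have := h y hyp hyq
    subst this
    exact hwq hyt

lemma walk_invar {V : Type*} {G : SimpleGraph V} {S : V → Prop}
    (hS : ∀ {a b : V}, G.Adj a b → (S a ↔ S b)) {a b : V} (p : G.Walk a b) :
    S a ↔ S b := by
  induction p with
  | nil => exact Iff.rfl
  | cons h p ih => exact (hS h).trans ih

lemma key_bridge {n : ℕ} (x : Fin (2 ^ n)) (hx : (x : ℕ) ≠ 0) :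
    ¬(BT n \ SimpleGraph.fromEdgeSet {s(x, pfin x)}).Reachable x (pfin x) := by
  intro hr
  set L := Nat.log 2 (x : ℕ) with hLdef
  set S : Fin (2 ^ n) → Prop := fun y => (y : ℕ) % 2 ^ (L + 1) = (x : ℕ) with hSdef
  have hxL1 : (x : ℕ) < 2 ^ (L + 1) := Nat.lt_pow_succ_log_self one_lt_two _
  have hxL : 2 ^ L ≤ (x : ℕ) := Nat.pow_log_le_self 2 hx
  have subclaim : ∀ (z t : Fin (2 ^ n)), (z : ℕ) ≠ 0 → (t : ℕ) = pv (z : ℕ) →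
      s(z, t) ≠ s(x, pfin x) → (S z ↔ S t) := by
    intro z t hz ht hne
    have hzx : (z : ℕ) ≠ (x : ℕ) := by
      intro h
      apply hne
      have hzx' : z = x := Fin.ext h
      subst hzx'
      have : t = pfin z := Fin.ext ht
      rw [this]
    constructor
    · intro hSz'
      have hSz : (z : ℕ) % 2 ^ (L + 1) = (x : ℕ) := hSz'
      have hzbig : 2 ^ (L + 1) ≤ (z : ℕ) := by
        by_contra hcon
        rw [Nat.mod_eq_of_lt (by omega)] at hSz
        exact hzx hSz
      have hz0 : (z : ℕ) ≠ 0 := hz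
      have hlog : L + 1 ≤ Nat.log 2 (z : ℕ) :=
        (Nat.le_log_iff_pow_le one_lt_two hz0).2 hzbig
      show (t : ℕ) % 2 ^ (L + 1) = (x : ℕ)
      rw [ht]
      show (z : ℕ) % 2 ^ (Nat.log 2 (z : ℕ)) % 2 ^ (L + 1) = _
      rw [Nat.mod_mod_of_dvd _ (pow_dvd_pow 2 hlog)]
      exact hSz
    · intro hSt'
      have hSt : (t : ℕ) % 2 ^ (L + 1) = (x : ℕ) := hSt'
      rcases le_or_gt (L + 1) (Nat.log 2 (z : ℕ)) with hlog | hlog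
      · show (z : ℕ) % 2 ^ (L + 1) = (x : ℕ)
        have : (z : ℕ) % 2 ^ (L + 1) = (t : ℕ) % 2 ^ (L + 1) := by
          rw [ht]
          show _ = (z : ℕ) % 2 ^ (Nat.log 2 (z : ℕ)) % 2 ^ (L + 1)
          rw [Nat.mod_mod_of_dvd _ (pow_dvd_pow 2 hlog)]
        rw [this]
        exact hSt
      · exfalso
        have h2 : (t : ℕ) < 2 ^ L := by
          rw [ht]
          exact lt_of_lt_of_le (Nat.mod_lt _ (Nat.two_pow_pos _))
            (Nat.pow_le_pow_right (by norm_num) (by omega))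
        have h3 : (t : ℕ) % 2 ^ (L + 1) = (t : ℕ) := Nat.mod_eq_of_lt (by
          have := Nat.pow_lt_pow_right (a := 2) one_lt_two (Nat.lt_succ_self L)
          omega)
        rw [h3] at hSt
        omega
  have hinv : ∀ {c d : Fin (2 ^ n)},
      (BT n \ SimpleGraph.fromEdgeSet {s(x, pfin x)}).Adj c d → (S c ↔ S d) := by
    intro c d hcd
    rw [SimpleGraph.sdiff_adj, SimpleGraph.fromEdgeSet_adj] at hcd
    obtain ⟨hadj, hne⟩ := hcd
    have hcd_ne : c ≠ d := hadj.ne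
    have hne' : s(c, d) ≠ s(x, pfin x) := by
      intro h
      exact hne ⟨by rw [h]; exact Set.mem_singleton _, hcd_ne⟩
    rcases (adj_iff.1 hadj).2 with ⟨h1, h2⟩ | ⟨h1, h2⟩
    · exact subclaim c d h1 h2 hne'
    · exact (subclaim d c h1 h2 (by rwa [Sym2.eq_swap])).symm
  have hSx : S x := Nat.mod_eq_of_lt hxL1
  have hSp : ¬ S (pfin x) := by
    show ¬ (pv (x : ℕ)) % 2 ^ (L + 1) = (x : ℕ)
    have h2 : pv (x : ℕ) < (x : ℕ) := pv_lt hx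
    rw [Nat.mod_eq_of_lt (by omega)]
    omega
  exact hSp ((walk_invar hinv hr.some).1 hSx)

lemma bt_isAcyclic (n : ℕ) : (BT n).IsAcyclic := by
  rw [SimpleGraph.isAcyclic_iff_forall_adj_isBridge]
  intro a b hab
  rw [SimpleGraph.isBridge_iff]
  rcases (adj_iff.1 hab).2 with ⟨h1, h2⟩ | ⟨h1, h2⟩
  · obtain rfl : b = pfin a := Fin.ext h2
    exact key_bridge a h1
  · obtain rfl : a = pfin b := Fin.ext h2
    have hsw : s(pfin b, b) = s(b, pfin b) := Sym2.eq_swap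
    rw [hsw]
    intro hr
    exact key_bridge b h1 hr.symm

lemma exists_d {n : ℕ} (u v : Fin (2 ^ n)) (huv : u ≠ v) :
    ∃ d, (u : ℕ) % 2 ^ d = (v : ℕ) % 2 ^ d ∧
      (∀ j, (u : ℕ) % 2 ^ j = (v : ℕ) % 2 ^ j → j ≤ d) ∧
      (u : ℕ).testBit d ≠ (v : ℕ).testBit d := by
  classical
  set P : ℕ → Prop := fun j => (u : ℕ) % 2 ^ j = (v : ℕ) % 2 ^ j with hPdef
  have hP0 : P 0 := by simp [hPdef, Nat.mod_one]
  have hPn : ∀ j, P j → j ≤ n := by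
    intro j hj
    by_contra hcon
    have hjn : n ≤ j := by omega
    have h2 : (2 : ℕ) ^ n ≤ 2 ^ j := Nat.pow_le_pow_right (by norm_num) hjn
    have hu : (u : ℕ) % 2 ^ j = (u : ℕ) := Nat.mod_eq_of_lt (by have := u.isLt; omega)
    have hv : (v : ℕ) % 2 ^ j = (v : ℕ) := Nat.mod_eq_of_lt (by have := v.isLt; omega)
    have hj' : (u : ℕ) % 2 ^ j = (v : ℕ) % 2 ^ j := hj
    rw [hu, hv] at hj'
    exact huv (Fin.ext hj')
  set d := Nat.findGreatest P n with hd
  have hPd : P d := Nat.findGreatest_spec (Nat.zero_le n) hP0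
  have hgreat : ∀ j, P j → j ≤ d := fun j hj => Nat.le_findGreatest (hPn j hj) hj
  refine ⟨d, hPd, hgreat, ?_⟩
  intro hbit
  have hPd1 : ¬ P (d + 1) := fun h => absurd (hgreat _ h) (by omega)
  apply hPd1
  show (u : ℕ) % 2 ^ (d + 1) = (v : ℕ) % 2 ^ (d + 1)
  have hdecomp : ∀ a : ℕ, a % 2 ^ (d + 1) = 2 ^ d * (a / 2 ^ d % 2) + a % 2 ^ d := by
    intro a
    rw [pow_succ]
    conv_lhs => rw [← Nat.div_add_mod (a % (2 ^ d * 2)) (2 ^ d)]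
    rw [Nat.mod_mul_right_div_self, Nat.mod_mod_of_dvd _ (dvd_mul_right _ 2)]
  have hbits : (u : ℕ) / 2 ^ d % 2 = (v : ℕ) / 2 ^ d % 2 := by
    rw [Nat.testBit_eq_decide_div_mod_eq, Nat.testBit_eq_decide_div_mod_eq] at hbit
    have := decide_eq_decide.mp hbit
    have h1 : (u : ℕ) / 2 ^ d % 2 < 2 := Nat.mod_lt _ (by norm_num)
    have h2 : (v : ℕ) / 2 ^ d % 2 < 2 := Nat.mod_lt _ (by norm_num)
    omega
  rw [hdecomp, hdecomp, hbits, hPd]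

lemma mod_eq_common {u v y d i j : ℕ} (hi : d ≤ i) (hj : d ≤ j)
    (huv : u % 2 ^ d = v % 2 ^ d)
    (hgreat : ∀ l, u % 2 ^ l = v % 2 ^ l → l ≤ d)
    (hyu : y = u % 2 ^ i) (hyv : y = v % 2 ^ j) : y = u % 2 ^ d := by
  rcases le_total i j with hij | hij
  · have h1 : v % 2 ^ j % 2 ^ i = v % 2 ^ i := Nat.mod_mod_of_dvd _ (pow_dvd_pow 2 hij)
    have h2 : y % 2 ^ i = y := Nat.mod_eq_of_lt (by rw [hyu]; exact Nat.mod_lt _ (Nat.two_pow_pos _))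
    have h3 : u % 2 ^ i = v % 2 ^ i := by
      rw [← hyu, ← h1, ← hyv, h2]
    have h4 : i ≤ d := hgreat i h3
    have : i = d := le_antisymm h4 hi
    rw [hyu, this]
  · have h1 : u % 2 ^ i % 2 ^ j = u % 2 ^ j := Nat.mod_mod_of_dvd _ (pow_dvd_pow 2 hij)
    have h2 : y % 2 ^ j = y := Nat.mod_eq_of_lt (by rw [hyv]; exact Nat.mod_lt _ (Nat.two_pow_pos _))
    have h3 : u % 2 ^ j = v % 2 ^ j := by
      rw [← hyv, ← h1, ← hyu, h2]
    have h4 : j ≤ d := hgreat j h3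
    have : j = d := le_antisymm h4 hj
    rw [hyv, this, ← huv]

lemma mod_eq_common0 {u y d i j : ℕ} (hi : d ≤ i)
    (hyu : y = u % 2 ^ i) (hyv : y = (u % 2 ^ d) % 2 ^ j) : y = u % 2 ^ d := by
  rcases le_total j d with hjd | hdj
  · have h1 : y < 2 ^ j := by rw [hyv]; exact Nat.mod_lt _ (Nat.two_pow_pos _)
    have h2 : y % 2 ^ d = u % 2 ^ d := by
      rw [hyu, Nat.mod_mod_of_dvd _ (pow_dvd_pow 2 hi)]
    have h3 : y % 2 ^ d = y := Nat.mod_eq_of_lt (lt_of_lt_of_le h1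
      (Nat.pow_le_pow_right (by norm_num) hjd))
    rw [← h3, h2]
  · rw [hyv, Nat.mod_eq_of_lt (lt_of_lt_of_le (Nat.mod_lt _ (Nat.two_pow_pos _))
      (Nat.pow_le_pow_right (by norm_num) hdj))]

lemma cnt_split {V : Type*} {G : SimpleGraph V} {a b z : V} (c : Sym2 V → ℕ) (col : ℕ)
    (p : G.Walk a b) (q : G.Walk b z) :
    (((p.append q).edges.filter (fun e => c e = col)).length) =
      ((p.edges.filter (fun e => c e = col)).length) +
      ((q.edges.filter (fun e => c e = col)).length) := by
  rw [SimpleGraph.Walk.edges_append, List.filter_append, List.length_append]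

lemma cnt_rev {V : Type*} {G : SimpleGraph V} {a b : V} (c : Sym2 V → ℕ) (col : ℕ)
    (p : G.Walk a b) :
    ((p.reverse.edges.filter (fun e => c e = col)).length) =
      ((p.edges.filter (fun e => c e = col)).length) := by
  rw [SimpleGraph.Walk.edges_reverse, List.filter_reverse, List.length_reverse]

lemma main (n : ℕ) : cfcNum (BT n) = n := by
  classical
  have hmem : n ∈ {k | ∃ c : Sym2 (Fin (2 ^ n)) → ℕ,
      (∀ e ∈ (BT n).edgeSet, c e < k) ∧ IsCFCColoring (BT n) c} := by
    refine ⟨myc, ?_, ?_⟩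
    · intro e he
      induction e using Sym2.ind with
      | _ a b =>
        rw [SimpleGraph.mem_edgeSet] at he
        rcases (adj_iff.1 he).2 with ⟨h1, h2⟩ | ⟨h1, h2⟩
        · have : myc s(a, b) = Nat.log 2 (a : ℕ) := by
            show Nat.log 2 (max (a : ℕ) (b : ℕ)) = _
            rw [h2, Nat.max_eq_left (le_of_lt (pv_lt h1))]
          rw [this]
          exact Nat.log_lt_of_lt_pow h1 a.isLt
        · have : myc s(a, b) = Nat.log 2 (b : ℕ) := by
            show Nat.log 2 (max (a : ℕ) (b : ℕ)) = _
            rw [h2, Nat.max_eq_right (le_of_lt (pv_lt h1))]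
          rw [this]
          exact Nat.log_lt_of_lt_pow h1 b.isLt
    · intro u v huv
      obtain ⟨d, hPd, hgreat, hbit⟩ := exists_d u v huv
      set w : Fin (2 ^ n) :=
        ⟨(u : ℕ) % 2 ^ d, lt_of_le_of_lt (Nat.mod_le _ _) u.isLt⟩ with hwdef
      obtain ⟨pu, hpu_path, hpu_supp, hpu_cnt⟩ := exists_up n d (2 ^ n) u w u.isLt rfl
      obtain ⟨pv, hpv_path, hpv_supp, hpv_cnt⟩ := exists_up n d (2 ^ n) v w v.isLt hPd
      refine ⟨pu.append pv.reverse, ?_, d, ?_⟩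
      · apply append_isPath hpu_path hpv_path.reverse
        intro y hyp hyq
        rw [SimpleGraph.Walk.support_reverse, List.mem_reverse] at hyq
        obtain ⟨i, hi, hyu⟩ := hpu_supp y hyp
        obtain ⟨j, hj, hyv⟩ := hpv_supp y hyq
        exact Fin.ext (mod_eq_common hi hj hPd hgreat hyu hyv)
      · rw [cnt_split, cnt_rev, hpu_cnt d, hpv_cnt d]
        have hvd : (v : ℕ).testBit d = !(u : ℕ).testBit d := by
          cases h1 : (u : ℕ).testBit d <;> cases h2 : (v : ℕ).testBit d <;> simp_all
        rw [hvd]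
        cases h1 : (u : ℕ).testBit d <;> simp
  apply le_antisymm
  · exact Nat.sInf_le hmem
  · refine le_csInf ⟨n, hmem⟩ ?_
    intro m hm
    obtain ⟨c', hlt, hcfc⟩ := hm
    set z0 : Fin (2 ^ n) := ⟨0, Nat.two_pow_pos n⟩ with hz0
    have hfix : ∀ x : Fin (2 ^ n), ∃ p : (BT n).Walk x z0, p.IsPath := by
      intro x
      obtain ⟨p, hp, -, -⟩ := exists_up n 0 (2 ^ n) x z0 x.isLt (by
        show (0 : ℕ) = (x : ℕ) % 2 ^ 0
        rw [pow_zero, Nat.mod_one])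
      exact ⟨p, hp⟩
    choose P0 hP0path using hfix
    have hinj : Function.Injective (fun (x : Fin (2 ^ n)) (i : Fin m) =>
        decide ((((P0 x).edges.filter (fun e => c' e = (i : ℕ))).length) % 2 = 1)) := by
      intro u v hFeq
      by_contra huv
      obtain ⟨d, hPd, hgreat, -⟩ := exists_d u v huv
      set w : Fin (2 ^ n) :=
        ⟨(u : ℕ) % 2 ^ d, lt_of_le_of_lt (Nat.mod_le _ _) u.isLt⟩ with hwdef
      obtain ⟨pu, hpu_path, hpu_supp, -⟩ := exists_up n d (2 ^ n) u w u.isLt rfl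
      obtain ⟨pv, hpv_path, hpv_supp, -⟩ := exists_up n d (2 ^ n) v w v.isLt hPd
      obtain ⟨pw, hpw_path, hpw_supp, -⟩ := exists_up n 0 (2 ^ n) w z0 w.isLt (by
        show (0 : ℕ) = (w : ℕ) % 2 ^ 0
        rw [pow_zero, Nat.mod_one])
      have hwv : (w : ℕ) = (v : ℕ) % 2 ^ d := hPd
      have hrpath : (pu.append pv.reverse).IsPath := by
        apply append_isPath hpu_path hpv_path.reverse
        intro y hyp hyq
        rw [SimpleGraph.Walk.support_reverse, List.mem_reverse] at hyq
        obtain ⟨i, hi, hyu⟩ := hpu_supp y hyp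
        obtain ⟨j, hj, hyv⟩ := hpv_supp y hyq
        exact Fin.ext (mod_eq_common hi hj hPd hgreat hyu hyv)
      have hupath : (pu.append pw).IsPath := by
        apply append_isPath hpu_path hpw_path
        intro y hyp hyq
        obtain ⟨i, hi, hyu⟩ := hpu_supp y hyp
        obtain ⟨j, hj, hyv⟩ := hpw_supp y hyq
        exact Fin.ext (mod_eq_common0 hi hyu hyv)
      have hvpath : (pv.append pw).IsPath := by
        apply append_isPath hpv_path hpw_path
        intro y hyp hyq
        obtain ⟨i, hi, hyu⟩ := hpv_supp y hyp
        obtain ⟨j, hj, hyv⟩ := hpw_supp y hyq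
        rw [hwv] at hyv
        exact Fin.ext ((mod_eq_common0 hi hyu hyv).trans hwv.symm)
      have hequ : P0 u = pu.append pw :=
        congrArg Subtype.val
          ((bt_isAcyclic n).path_unique ⟨P0 u, hP0path u⟩ ⟨pu.append pw, hupath⟩)
      have heqv : P0 v = pv.append pw :=
        congrArg Subtype.val
          ((bt_isAcyclic n).path_unique ⟨P0 v, hP0path v⟩ ⟨pv.append pw, hvpath⟩)
      obtain ⟨q, hqpath, col, hcol⟩ := hcfc u v huv
      have heqq : q = pu.append pv.reverse :=
        congrArg Subtype.val
          ((bt_isAcyclic n).path_unique ⟨q, hqpath⟩ ⟨pu.append pv.reverse, hrpath⟩)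
      rw [heqq, cnt_split, cnt_rev] at hcol
      have hAu : (((P0 u).edges.filter (fun e => c' e = col)).length) =
          ((pu.edges.filter (fun e => c' e = col)).length) +
          ((pw.edges.filter (fun e => c' e = col)).length) := by
        rw [hequ, cnt_split]
      have hAv : (((P0 v).edges.filter (fun e => c' e = col)).length) =
          ((pv.edges.filter (fun e => c' e = col)).length) +
          ((pw.edges.filter (fun e => c' e = col)).length) := by
        rw [heqv, cnt_split]
      have hpar : (((P0 u).edges.filter (fun e => c' e = col)).length) % 2 =
          (((P0 v).edges.filter (fun e => c' e = col)).length) % 2 := by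
        rcases lt_or_ge col m with h | h
        · have h5 := congrFun hFeq ⟨col, h⟩
          simp only [] at h5
          have h6 := decide_eq_decide.mp h5
          have h7 : (((P0 u).edges.filter (fun e => c' e = col)).length) % 2 < 2 :=
            Nat.mod_lt _ (by norm_num)
          have h8 : (((P0 v).edges.filter (fun e => c' e = col)).length) % 2 < 2 :=
            Nat.mod_lt _ (by norm_num)
          omega
        · have hz : ∀ (a : Fin (2 ^ n)) (p : (BT n).Walk a z0),
              ((p.edges.filter (fun e => c' e = col)).length) = 0 := by
            intro a p
            rw [List.length_eq_zero_iff]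
            rw [List.filter_eq_nil_iff]
            intro e he
            have := hlt e (p.edges_subset_edgeSet he)
            simp only [decide_eq_true_eq]
            omega
          rw [hz u (P0 u), hz v (P0 v)]
      omega
    have hcard := Fintype.card_le_of_injective _ hinj
    rw [Fintype.card_fun, Fintype.card_fin, Fintype.card_fin, Fintype.card_bool] at hcard
    exact (Nat.pow_le_pow_iff_right (by norm_num)).1 hcard

end CFCAux

/-- For the binomial tree `B_k` with `2^(k-1)` vertices (`k ≥ 2`),
`cfc(B_k) = k - 1`. -/
theorem cfc_binomialTree (k : ℕ) (hk : 2 ≤ k) :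
    cfcNum (binomialTree k) = k - 1 := by
  obtain ⟨m, rfl⟩ : ∃ m, k = m + 2 := ⟨k - 2, by omega⟩
  exact CFCAux.main (m + 1)
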